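/- arXiv:1611.05555 — 7 statements merged into one kernel-verified Lean document; each statement's English description precedes it below -/
import Mathlib

section
/- In a shelf with a two-sided identity element, a*b = b*(a*b) for all a, b. -/
/-- In a shelf with a two-sided identity element, a*b = b*(a*b). -/
theorem unital_shelf_absorb_left {X : Type*} (op : X → X → X)
    (sd : ∀ a b c : X, op (op a b) c = op (op a c) (op b c))
    (e : X) (he : ∀ a : X, op e a = a ∧ op a e = a) :
    ∀ a b : X, op a b = op b (op a b) := by
  intro a b
  have h := sd e a b
  rw [(he a).1, (he b).1] at h
  exact h
end

section
/- Every proto unital shelf is associative: if a shelf satisfies a*b = b*(a*b) and a*b = (a*b)*b for all a,b, then (a*b)*c = a*(b*c) for all a,b,c. -/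
/-- Every proto unital shelf is associative. -/
theorem proto_unital_shelf_assoc {X : Type*} (op : X → X → X)
    (sd : ∀ a b c : X, op (op a b) c = op (op a c) (op b c))
    (h1 : ∀ a b : X, op a b = op b (op a b))
    (h2 : ∀ a b : X, op a b = op (op a b) b) :
    ∀ a b c : X, op (op a b) c = op a (op b c) := by
  intro a b c
  rw [sd a b c, sd a c (op b c), ← h1 b c, ← h2]
end

section
/- In any associative shelf, a*b*b*c = a*b*c for all a,b,c (where products associate, e.g. a*b*b*c = ((a*b)*b)*c). -/
/-- In any associative shelf, a*b*b*c = a*b*c. -/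
theorem assoc_shelf_abbc {X : Type*} (op : X → X → X)
    (assoc : ∀ a b c : X, op (op a b) c = op a (op b c))
    (sd : ∀ a b c : X, op (op a b) c = op (op a c) (op b c)) :
    ∀ a b c : X, op (op (op a b) b) c = op (op a b) c := by
  intro a b c
  calc op (op (op a b) b) c
      = op (op (op a b) c) (op b c) := sd (op a b) b c
    _ = op (op (op (op a b) c) b) c := (assoc _ b c).symm
    _ = op (op (op a b) (op c b)) c := by rw [assoc (op a b) c b]
    _ = op (op (op a c) b) c := by rw [show op (op a b) (op c b) = op (op a c) b from (sd a c b).symm]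
    _ = op (op a c) (op b c) := assoc _ b c
    _ = op (op a b) c := (sd a b c).symm
end

section
/- In a proto unital shelf, a*b = b*a if and only if a*b*a = b*a*b (products associate to the left), for all a,b. -/
/-- In a proto unital shelf, a*b = b*a iff a*b*a = b*a*b. -/
theorem proto_unital_comm_iff_braid {X : Type*} (op : X → X → X)
    (sd : ∀ a b c : X, op (op a b) c = op (op a c) (op b c))
    (h1 : ∀ a b : X, op a b = op b (op a b))
    (h2 : ∀ a b : X, op a b = op (op a b) b) :
    ∀ a b : X, op a b = op b a ↔ op (op a b) a = op (op b a) b := by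
  have assoc : ∀ a b c : X, op (op a b) c = op a (op b c) := by
    intro a b c
    calc op (op a b) c = op (op a c) (op b c) := sd a b c
      _ = op (op a (op b c)) (op c (op b c)) := sd a c (op b c)
      _ = op (op a (op b c)) (op b c) := by rw [← h1 b c]
      _ = op a (op b c) := (h2 a (op b c)).symm
  have key : ∀ a b : X, op (op a b) a = op b a := by
    intro a b
    rw [assoc, ← h1 b a]
  intro a b
  rw [key a b, key b a]
  exact ⟨Eq.symm, Eq.symm⟩
end

section
/- Let (X,*) be a proto unital shelf or idempotent semigroup, and define two relations on X: a ~ b iff there exist x,y with a = x*y*x and b = y*x*y; and a ≈ b iff there exist x,y with a = x*y and b = y*x. Then the equivalence relations generated by ~ and by ≈ coincide. -/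
private lemma eqvGen_le_aux {X : Type*} {r s : X → X → Prop}
    (h : ∀ a b, r a b → Relation.EqvGen s a b) :
    ∀ a b, Relation.EqvGen r a b → Relation.EqvGen s a b := by
  intro a b hr
  induction hr with
  | rel a b h' => exact h a b h'
  | refl a => exact Relation.EqvGen.refl a
  | symm a b _ ih => exact ih.symm
  | trans a b c _ _ ih1 ih2 => exact ih1.trans _ _ _ ih2

/-- For a proto unital shelf or an idempotent semigroup, the equivalence relation
generated by `a ~ b ↔ ∃ x y, a = x*y*x ∧ b = y*x*y` coincides with the one generated
by `a ≈ b ↔ ∃ x y, a = x*y ∧ b = y*x`. -/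
theorem lbo_relations_coincide {X : Type*} (op : X → X → X)
    (h : ((∀ a b c : X, op (op a b) c = op (op a c) (op b c)) ∧
          (∀ a b : X, op a b = op b (op a b)) ∧
          (∀ a b : X, op a b = op (op a b) b)) ∨
         ((∀ a b c : X, op (op a b) c = op a (op b c)) ∧
          (∀ a : X, op a a = a))) :
    Relation.EqvGen (fun a b => ∃ x y : X, a = op (op x y) x ∧ b = op (op y x) y) =
      Relation.EqvGen (fun a b => ∃ x y : X, a = op x y ∧ b = op y x) := by
  set r : X → X → Prop := fun a b => ∃ x y : X, a = op (op x y) x ∧ b = op (op y x) y with hr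
  set s : X → X → Prop := fun a b => ∃ x y : X, a = op x y ∧ b = op y x with hs
  funext a b
  apply propext
  rcases h with ⟨LD, L2, L3⟩ | ⟨assoc, idem⟩
  · -- proto unital shelf
    have pidem : ∀ u v : X, op (op u v) (op u v) = op u v := by
      intro u v
      have e1 : op u v = op v (op u v) := L2 u v
      have e2 : op v (op u v) = op (op v (op u v)) (op u v) := L3 v (op u v)
      calc op (op u v) (op u v) = op (op v (op u v)) (op u v) := by rw [← e1]
        _ = op v (op u v) := e2.symm
        _ = op u v := e1.symm
    have aba : ∀ a b : X, op (op a b) a = op b a := by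
      intro a b
      calc op (op a b) a = op (op a a) (op b a) := LD a b a
        _ = op (op a (op b a)) (op a (op b a)) := LD a a (op b a)
        _ = op (op b a) (op b a) := by rw [← L2 b a]
        _ = op b a := pidem b a
    constructor
    · refine eqvGen_le_aux (fun a b hab => ?_) a b
      obtain ⟨x, y, ha, hb⟩ := hab
      refine Relation.EqvGen.rel _ _ ⟨y, x, ?_, ?_⟩
      · rw [ha, aba x y]
      · rw [hb, aba y x]
    · refine eqvGen_le_aux (fun a b hab => ?_) a b
      obtain ⟨x, y, ha, hb⟩ := hab
      refine Relation.EqvGen.rel _ _ ⟨y, x, ?_, ?_⟩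
      · rw [ha, aba y x]
      · rw [hb, aba x y]
  · -- idempotent semigroup
    constructor
    · refine eqvGen_le_aux (fun a b hab => ?_) a b
      obtain ⟨x, y, ha, hb⟩ := hab
      -- a = xyx ≈ x(xy) = xy ≈ yx = y(yx) ≈ yxy = b
      have h1 : Relation.EqvGen s a (op x (op x y)) :=
        Relation.EqvGen.rel _ _ ⟨op x y, x, ha, rfl⟩
      have e1 : op x (op x y) = op x y := by rw [← assoc, idem]
      have h2 : Relation.EqvGen s (op x y) (op y x) :=
        Relation.EqvGen.rel _ _ ⟨x, y, rfl, rfl⟩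
      have h3 : Relation.EqvGen s b (op y (op y x)) :=
        Relation.EqvGen.rel _ _ ⟨op y x, y, hb, rfl⟩
      have e2 : op y (op y x) = op y x := by rw [← assoc, idem]
      rw [e1] at h1
      rw [e2] at h3
      exact (h1.trans _ _ _ h2).trans _ _ _ h3.symm
    · refine eqvGen_le_aux (fun a b hab => ?_) a b
      obtain ⟨x, y, ha, hb⟩ := hab
      -- a = xy ~ xyx ~ yxy ~ yx = b
      have h1 : Relation.EqvGen r a (op (op x y) x) := by
        refine Relation.EqvGen.rel _ _ ⟨op x y, x, ?_, ?_⟩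
        · rw [ha, assoc (op x y) x (op x y), ← assoc x x y, idem x, idem (op x y)]
        · rw [← assoc x x y, idem x]
      have h2 : Relation.EqvGen r (op (op x y) x) (op (op y x) y) :=
        Relation.EqvGen.rel _ _ ⟨x, y, rfl, rfl⟩
      have h3 : Relation.EqvGen r b (op (op y x) y) := by
        refine Relation.EqvGen.rel _ _ ⟨op y x, y, ?_, ?_⟩
        · rw [hb, assoc (op y x) y (op y x), ← assoc y y x, idem y, idem (op y x)]
        · rw [← assoc y y x, idem y]
      exact (h1.trans _ _ _ h2).trans _ _ _ h3.symm
end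

section
/- If (X,*) is a finite commutative semigroup satisfying a*b*b*c = a*b*c, then the map ∂_1: Z[X^2] → Z[X], ∂_1(x_0,x_1) = x_0*x_1*x_0 − x_1*x_0*x_1, is the zero map, and hence the zeroth lbo homology group H_0(X) = Z[X]/im(∂_1) is free abelian of rank |X|. -/
/-- The first lbo boundary map `∂_1 : ℤ[X²] → ℤ[X]`,
`∂_1(x₀,x₁) = x₀*x₁*x₀ − x₁*x₀*x₁`, extended linearly. -/
noncomputable def lboBoundaryOne {X : Type*} (op : X → X → X) :
    ((X × X) →₀ ℤ) →ₗ[ℤ] (X →₀ ℤ) :=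
  Finsupp.lift _ ℤ _ (fun p =>
    Finsupp.single (op (op p.1 p.2) p.1) (1 : ℤ) -
      Finsupp.single (op (op p.2 p.1) p.2) (1 : ℤ))

/-- For a finite commutative semigroup satisfying `a*b*b*c = a*b*c`, the first lbo
boundary map is zero, so `H₀(X) = ℤ[X]/im(∂_1)` is free abelian of rank `|X|`. -/
theorem comm_semigroup_H0 {X : Type*} [Fintype X] (op : X → X → X)
    (assoc : ∀ a b c : X, op (op a b) c = op a (op b c))
    (comm : ∀ a b : X, op a b = op b a)
    (habbc : ∀ a b c : X, op (op (op a b) b) c = op (op a b) c) :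
    lboBoundaryOne op = 0 ∧
    Nonempty (((X →₀ ℤ) ⧸ LinearMap.range (lboBoundaryOne op)) ≃ₗ[ℤ]
      (Fin (Fintype.card X) → ℤ)) := by
  haveI : Std.Associative op := ⟨assoc⟩
  haveI : Std.Commutative op := ⟨comm⟩
  have key : ∀ a b : X, op (op a b) a = op (op b a) b := by
    intro a b
    calc op (op a b) a = op (op (op a b) b) a := (habbc a b a).symm
      _ = op (op (op b a) a) b := by ac_rfl
      _ = op (op b a) b := habbc b a b
  have hz : lboBoundaryOne op = 0 := by
    apply Finsupp.lhom_ext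
    intro p n
    simp [lboBoundaryOne, key p.1 p.2]
  refine ⟨hz, ⟨?_⟩⟩
  have hbot : LinearMap.range (lboBoundaryOne op) = ⊥ := by
    rw [hz]; exact LinearMap.range_zero
  exact (Submodule.quotEquivOfEqBot _ hbot).trans
    ((Finsupp.linearEquivFunOnFinite ℤ ℤ X).trans
      (LinearEquiv.funCongrLeft ℤ ℤ (Fintype.equivFin X).symm))
end

section
/- The set of elements of the Jones monoid J_n admitting a fixed partition P = a_1 + ... + a_k of n with all parts a_i ≤ 3 is closed under composition and consists entirely of idempotent elements; in particular it forms an idempotent submonoid of J_n. -/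
/-- The defining relations of the Jones monoid `J_{m+1}` on generators
`h_0, …, h_{m-1}` (the `m` hook generators): `h_i h_i = h_i`,
`h_i h_j h_i = h_i` for `|i - j| = 1`, and `h_i h_j = h_j h_i` for `|i - j| ≥ 2`. -/
def jonesRel (m : ℕ) : FreeMonoid (Fin m) → FreeMonoid (Fin m) → Prop := fun u v =>
  (∃ i : Fin m, u = FreeMonoid.of i * FreeMonoid.of i ∧ v = FreeMonoid.of i) ∨
  (∃ i j : Fin m, ((i : ℕ) + 1 = j ∨ (j : ℕ) + 1 = i) ∧
    u = FreeMonoid.of i * FreeMonoid.of j * FreeMonoid.of i ∧ v = FreeMonoid.of i) ∨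
  (∃ i j : Fin m, ((i : ℕ) + 2 ≤ j ∨ (j : ℕ) + 2 ≤ i) ∧
    u = FreeMonoid.of i * FreeMonoid.of j ∧ v = FreeMonoid.of j * FreeMonoid.of i)

/-- The Jones monoid `J_n` presented with `n - 1` hook generators. -/
abbrev JonesMonoid (n : ℕ) := (conGen (jonesRel (n - 1))).Quotient

/-- The image of the `i`-th hook generator `h_{i+1}` (acting on strands `i+1, i+2`)
in the Jones monoid. -/
def jonesGen (n : ℕ) (i : Fin (n - 1)) : JonesMonoid n :=
  (conGen (jonesRel (n - 1))).mk' (FreeMonoid.of i)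


section Abstract
variable {M : Type*} [Monoid M] {I : Type*}

lemma aux_comm_prodg (g : I → M) (x : M) :
    ∀ l : List I, (∀ i ∈ l, x * g i = g i * x) → x * (l.map g).prod = (l.map g).prod * x := by
  intro l
  induction l with
  | nil => simp
  | cons i t ih =>
    intro h
    simp only [List.map_cons, List.prod_cons]
    rw [← mul_assoc, h i List.mem_cons_self, mul_assoc,
      ih (fun j hj => h j (List.mem_cons_of_mem i hj)), ← mul_assoc]

lemma aux_split (g : I → M) (β : I → ℕ)
    (h2 : ∀ i j, β i ≠ β j → g i * g j = g j * g i) (b : ℕ) :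
    ∀ l : List I, (l.map g).prod =
      ((l.filter (fun i => β i = b)).map g).prod *
      ((l.filter (fun i => β i ≠ b)).map g).prod := by
  intro l
  induction l with
  | nil => simp
  | cons i t ih =>
    by_cases hb : β i = b
    · simp only [List.filter_cons, hb, decide_true, if_true, List.map_cons, List.prod_cons, ih,
        mul_assoc]
      simp [hb]
    · have hcomm : g i * ((t.filter (fun i => β i = b)).map g).prod
          = ((t.filter (fun i => β i = b)).map g).prod * g i := by
        apply aux_comm_prodg
        intro j hj
        have : β j = b := by simpa using (List.mem_filter.mp hj).2
        exact h2 i j (fun hh => hb (hh.trans this))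
      simp only [List.filter_cons, hb, List.map_cons, List.prod_cons, ih]
      simp only [decide_true, decide_false, if_false, ite_not, Bool.not_false, if_true,
        List.map_cons, List.prod_cons]
      rw [← mul_assoc, hcomm, mul_assoc]
      simp [hb]

def AuxGood (g : I → M) (β : I → ℕ) (i : I) (x : M) : Prop :=
  x = g i ∨ ∃ j, β j = β i ∧ x = g i * g j

lemma aux_good_step (g : I → M) (β : I → ℕ)
    (h1 : ∀ i, g i * g i = g i)
    (h3 : ∀ i j, β i = β j → g i * g j * g i = g i)
    (h4 : ∀ i j l, β i = β j → β j = β l → i = j ∨ j = l ∨ i = l)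
    (i : I) (x : M) (hx : AuxGood g β i x) (j : I) (hj : β j = β i) :
    AuxGood g β i (x * g j) := by
  rcases hx with rfl | ⟨j0, hj0, rfl⟩
  · exact Or.inr ⟨j, hj, rfl⟩
  · rcases h4 i j0 j hj0.symm (hj0.trans hj.symm) with rfl | rfl | rfl
    · exact Or.inr ⟨j, hj, by rw [h1]⟩
    · exact Or.inr ⟨j0, hj0, by rw [mul_assoc, h1]⟩
    · exact Or.inl (h3 i j0 hj0.symm)

lemma aux_good_prod (g : I → M) (β : I → ℕ)
    (h1 : ∀ i, g i * g i = g i)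
    (h3 : ∀ i j, β i = β j → g i * g j * g i = g i)
    (h4 : ∀ i j l, β i = β j → β j = β l → i = j ∨ j = l ∨ i = l)
    (i : I) :
    ∀ (t : List I) (x : M), AuxGood g β i x → (∀ j ∈ t, β j = β i) →
      AuxGood g β i (x * (t.map g).prod) := by
  intro t
  induction t with
  | nil => intro x hx _; simpa using hx
  | cons j t ih =>
    intro x hx h
    have := ih (x * g j) (aux_good_step g β h1 h3 h4 i x hx j (h j List.mem_cons_self))
      (fun m hm => h m (List.mem_cons_of_mem j hm))
    simpa [mul_assoc] using this

lemma aux_good_idem (g : I → M) (β : I → ℕ)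
    (h1 : ∀ i, g i * g i = g i)
    (h3 : ∀ i j, β i = β j → g i * g j * g i = g i)
    (i : I) (x : M) (hx : AuxGood g β i x) : x * x = x := by
  rcases hx with rfl | ⟨j, hj, rfl⟩
  · exact h1 i
  · calc g i * g j * (g i * g j) = g i * (g j * g i * g j) := by simp [mul_assoc]
      _ = g i * g j := by rw [h3 j i hj]

lemma aux_prodg_idem (g : I → M) (β : I → ℕ)
    (h1 : ∀ i, g i * g i = g i)
    (h2 : ∀ i j, β i ≠ β j → g i * g j = g j * g i)
    (h3 : ∀ i j, β i = β j → g i * g j * g i = g i)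
    (h4 : ∀ i j l, β i = β j → β j = β l → i = j ∨ j = l ∨ i = l) :
    ∀ l : List I, (l.map g).prod * (l.map g).prod = (l.map g).prod := by
  have key : ∀ N (l : List I), l.length ≤ N →
      (l.map g).prod * (l.map g).prod = (l.map g).prod := by
    intro N
    induction N with
    | zero =>
      intro l hl
      simp [List.length_eq_zero_iff.mp (Nat.le_zero.mp hl)]
    | succ N ih =>
      rintro (_ | ⟨i, t⟩) hl
      · simp
      · have ht : t.length ≤ N := by simpa using hl
        have hAmem : ∀ j ∈ t.filter (fun j => β j = β i), β j = β i :=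
          fun j hj => by simpa using (List.mem_filter.mp hj).2
        have hBmem : ∀ j ∈ t.filter (fun j => β j ≠ β i), β j ≠ β i :=
          fun j hj => by simpa using (List.mem_filter.mp hj).2
        set pA := ((t.filter (fun j => β j = β i)).map g).prod with hpA
        set pB := ((t.filter (fun j => β j ≠ β i)).map g).prod with hpB
        have hsplit : (t.map g).prod = pA * pB := aux_split g β h2 (β i) t
        have hBB : pB * pB = pB :=
          ih _ (le_trans (List.length_filter_le _ _) ht)
        have hC : (g i * pA) * (g i * pA) = g i * pA := by
          apply aux_good_idem g β h1 h3 i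
          have := aux_good_prod g β h1 h3 h4 i (t.filter (fun j => β j = β i)) (g i)
            (Or.inl rfl) hAmem
          exact this
        have hcomm : (g i * pA) * pB = pB * (g i * pA) := by
          apply aux_comm_prodg
          intro j hj
          have hji : β j ≠ β i := hBmem j hj
          have e1 : g i * g j = g j * g i := h2 i j (fun hh => hji hh.symm)
          have e2 : pA * g j = g j * pA := by
            symm
            apply aux_comm_prodg
            intro m hm
            exact h2 j m (fun hh => hji (hh.trans (hAmem m hm)))
          calc (g i * pA) * g j = g i * (g j * pA) := by rw [mul_assoc, e2]
            _ = g j * (g i * pA) := by rw [← mul_assoc, e1, mul_assoc]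
        have hcomm' : pB * (g i * pA) = (g i * pA) * pB := hcomm.symm
        calc ((i :: t).map g).prod * ((i :: t).map g).prod
            = ((g i * pA) * pB) * ((g i * pA) * pB) := by
              simp [List.map_cons, List.prod_cons, hsplit, mul_assoc]
          _ = (g i * pA) * (pB * (g i * pA)) * pB := by simp [mul_assoc]
          _ = (g i * pA) * ((g i * pA) * pB) * pB := by rw [hcomm']
          _ = ((g i * pA) * (g i * pA)) * (pB * pB) := by simp [mul_assoc]
          _ = (g i * pA) * pB := by rw [hC, hBB]
          _ = ((i :: t).map g).prod := by simp [List.map_cons, List.prod_cons, hsplit, mul_assoc]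
  intro l
  exact key l.length l le_rfl

end Abstract

def auxCum (k : ℕ) (parts : Fin k → ℕ) (t : ℕ) : ℕ :=
  ∑ j ∈ Finset.univ.filter (fun j : Fin k => (j : ℕ) < t), parts j

def auxBlk (k : ℕ) (parts : Fin k → ℕ) (i : ℕ) : ℕ :=
  Nat.findGreatest (fun t => auxCum k parts t ≤ i) k

lemma auxCum_zero (k : ℕ) (parts : Fin k → ℕ) : auxCum k parts 0 = 0 := by
  simp [auxCum]

lemma auxCum_mono (k : ℕ) (parts : Fin k → ℕ) {a b : ℕ} (h : a ≤ b) :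
    auxCum k parts a ≤ auxCum k parts b := by
  apply Finset.sum_le_sum_of_subset
  intro j hj
  simp only [Finset.mem_filter, Finset.mem_univ, true_and] at *
  omega

lemma auxCum_k (n k : ℕ) (parts : Fin k → ℕ) (hsum : ∑ t, parts t = n) :
    auxCum k parts k = n := by
  rw [auxCum, Finset.filter_true_of_mem (fun j _ => j.isLt)]
  exact hsum

lemma auxCum_succ (k : ℕ) (parts : Fin k → ℕ) (t : ℕ) (ht : t < k) :
    auxCum k parts (t + 1) = auxCum k parts t + parts ⟨t, ht⟩ := by
  have hins : Finset.univ.filter (fun j : Fin k => (j : ℕ) < t + 1)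
      = insert (⟨t, ht⟩ : Fin k) (Finset.univ.filter (fun j : Fin k => (j : ℕ) < t)) := by
    ext j
    simp only [Finset.mem_filter, Finset.mem_univ, true_and, Finset.mem_insert, Fin.ext_iff]
    omega
  rw [auxCum, hins, Finset.sum_insert (by simp)]
  rw [auxCum]
  omega

lemma auxBlk_le (k : ℕ) (parts : Fin k → ℕ) (i : ℕ) : auxBlk k parts i ≤ k :=
  Nat.findGreatest_le k

lemma auxBlk_cum_le (k : ℕ) (parts : Fin k → ℕ) (i : ℕ) :
    auxCum k parts (auxBlk k parts i) ≤ i := by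
  have := Nat.findGreatest_spec (P := fun t => auxCum k parts t ≤ i)
    (Nat.zero_le k) (by simp [auxCum_zero])
  exact this

lemma auxBlk_spec (n k : ℕ) (parts : Fin k → ℕ) (hsum : ∑ t, parts t = n)
    (i : Fin (n - 1))
    (hOk : ¬ ∃ t : Fin k, 0 < (t : ℕ) ∧ (i : ℕ) + 1 = auxCum k parts (t : ℕ)) :
    auxCum k parts (auxBlk k parts i) ≤ i ∧
    (i : ℕ) + 2 ≤ auxCum k parts (auxBlk k parts i + 1) ∧
    auxBlk k parts i < k := by
  have hi : (i : ℕ) < n - 1 := i.isLt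
  have hn2 : 2 ≤ n := by omega
  have hlow : auxCum k parts (auxBlk k parts i) ≤ i := auxBlk_cum_le k parts i
  have hltk : auxBlk k parts i < k := by
    rcases lt_or_eq_of_le (auxBlk_le k parts i) with h | h
    · exact h
    · exfalso
      rw [h] at hlow
      rw [auxCum_k n k parts hsum] at hlow
      omega
  have hup : ¬ auxCum k parts (auxBlk k parts i + 1) ≤ (i : ℕ) :=
    Nat.findGreatest_is_greatest (P := fun t => auxCum k parts t ≤ (i : ℕ))
      (Nat.lt_succ_self _) hltk
  have hne : auxCum k parts (auxBlk k parts i + 1) ≠ (i : ℕ) + 1 := by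
    rcases lt_or_eq_of_le (Nat.succ_le_of_lt hltk) with h | h
    · intro hc
      exact hOk ⟨⟨auxBlk k parts i + 1, h⟩, by simp, hc.symm⟩
    · have : auxCum k parts (auxBlk k parts ↑i + 1) = n := by
        rw [show auxBlk k parts ↑i + 1 = k from h, auxCum_k n k parts hsum]
      omega
  omega

lemma auxBlk_unique (n k : ℕ) (parts : Fin k → ℕ) (i : ℕ)
    (t : ℕ) (htk : t ≤ k)
    (hA : auxCum k parts t ≤ i) (hB : i + 2 ≤ auxCum k parts (t + 1)) :
    t = auxBlk k parts i := by
  rcases lt_trichotomy t (auxBlk k parts i) with h | h | h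
  · exfalso
    have : auxCum k parts (t + 1) ≤ auxCum k parts (auxBlk k parts i) :=
      auxCum_mono k parts h
    have := auxBlk_cum_le k parts i
    omega
  · exact h
  · exfalso
    have hnb : ¬ auxCum k parts t ≤ i :=
      Nat.findGreatest_is_greatest (P := fun s => auxCum k parts s ≤ i) h htk
    exact hnb hA
lemma auxBlk_succ (n k : ℕ) (parts : Fin k → ℕ) (hsum : ∑ t, parts t = n)
    (i j : Fin (n - 1))
    (hOki : ¬ ∃ t : Fin k, 0 < (t : ℕ) ∧ (i : ℕ) + 1 = auxCum k parts (t : ℕ))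
    (hOkj : ¬ ∃ t : Fin k, 0 < (t : ℕ) ∧ (j : ℕ) + 1 = auxCum k parts (t : ℕ))
    (hij : (j : ℕ) = (i : ℕ) + 1) :
    auxBlk k parts (j : ℕ) = auxBlk k parts (i : ℕ) := by
  obtain ⟨hlowi, hupi, hki⟩ := auxBlk_spec n k parts hsum i hOki
  have hj : (j : ℕ) < n - 1 := j.isLt
  have h3 : (i : ℕ) + 3 ≤ auxCum k parts (auxBlk k parts (i : ℕ) + 1) := by
    rcases lt_or_eq_of_le hupi with h | h
    · omega
    · exfalso
      rcases lt_or_eq_of_le (Nat.succ_le_of_lt hki) with hk | hk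
      · exact hOkj ⟨⟨auxBlk k parts (i : ℕ) + 1, hk⟩, by simp, by simp only [Fin.val_mk]; omega⟩
      · have : auxCum k parts (auxBlk k parts (i : ℕ) + 1) = n := by
          rw [show auxBlk k parts (i : ℕ) + 1 = k from hk, auxCum_k n k parts hsum]
        omega
  exact (auxBlk_unique n k parts (j : ℕ) (auxBlk k parts (i : ℕ)) (le_of_lt hki)
    (by omega) (by omega)).symm

lemma auxBlk_same (n k : ℕ) (parts : Fin k → ℕ) (hle : ∀ t, parts t ≤ 3)
    (hsum : ∑ t, parts t = n) (i j : Fin (n - 1))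
    (hOki : ¬ ∃ t : Fin k, 0 < (t : ℕ) ∧ (i : ℕ) + 1 = auxCum k parts (t : ℕ))
    (hOkj : ¬ ∃ t : Fin k, 0 < (t : ℕ) ∧ (j : ℕ) + 1 = auxCum k parts (t : ℕ))
    (hb : auxBlk k parts (i : ℕ) = auxBlk k parts (j : ℕ)) :
    (i : ℕ) = j ∨ (i : ℕ) + 1 = j ∨ (j : ℕ) + 1 = i := by
  obtain ⟨hlowi, hupi, hki⟩ := auxBlk_spec n k parts hsum i hOki
  obtain ⟨hlowj, hupj, hkj⟩ := auxBlk_spec n k parts hsum j hOkj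
  rw [hb] at hlowi hupi
  have hsucc := auxCum_succ k parts (auxBlk k parts (j : ℕ)) hkj
  have hle3 := hle ⟨auxBlk k parts (j : ℕ), hkj⟩
  omega

lemma auxBlk_gap (n k : ℕ) (parts : Fin k → ℕ) (hsum : ∑ t, parts t = n)
    (i j : Fin (n - 1))
    (hOki : ¬ ∃ t : Fin k, 0 < (t : ℕ) ∧ (i : ℕ) + 1 = auxCum k parts (t : ℕ))
    (hOkj : ¬ ∃ t : Fin k, 0 < (t : ℕ) ∧ (j : ℕ) + 1 = auxCum k parts (t : ℕ))
    (hb : auxBlk k parts (i : ℕ) ≠ auxBlk k parts (j : ℕ)) :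
    (i : ℕ) + 2 ≤ j ∨ (j : ℕ) + 2 ≤ i := by
  by_contra hc
  push_neg at hc
  have : (i : ℕ) = j ∨ (j : ℕ) = i + 1 ∨ (i : ℕ) = j + 1 := by omega
  rcases this with h | h | h
  · exact hb (by rw [h])
  · exact hb (auxBlk_succ n k parts hsum i j hOki hOkj h).symm
  · exact hb (auxBlk_succ n k parts hsum j i hOkj hOki h)

lemma jones_sq (n : ℕ) (i : Fin (n - 1)) :
    jonesGen n i * jonesGen n i = jonesGen n i := by
  have h : (conGen (jonesRel (n - 1))) (FreeMonoid.of i * FreeMonoid.of i) (FreeMonoid.of i) :=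
    ConGen.Rel.of _ _ (Or.inl ⟨i, rfl, rfl⟩)
  simpa [jonesGen, map_mul] using (Con.eq _).mpr h

lemma jones_braid (n : ℕ) (i j : Fin (n - 1)) (h : (i : ℕ) + 1 = j ∨ (j : ℕ) + 1 = i) :
    jonesGen n i * jonesGen n j * jonesGen n i = jonesGen n i := by
  have hr : (conGen (jonesRel (n - 1)))
      (FreeMonoid.of i * FreeMonoid.of j * FreeMonoid.of i) (FreeMonoid.of i) :=
    ConGen.Rel.of _ _ (Or.inr (Or.inl ⟨i, j, h, rfl, rfl⟩))
  simpa [jonesGen, map_mul] using (Con.eq _).mpr hr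

lemma jones_comm (n : ℕ) (i j : Fin (n - 1)) (h : (i : ℕ) + 2 ≤ j ∨ (j : ℕ) + 2 ≤ i) :
    jonesGen n i * jonesGen n j = jonesGen n j * jonesGen n i := by
  have hr : (conGen (jonesRel (n - 1)))
      (FreeMonoid.of i * FreeMonoid.of j) (FreeMonoid.of j * FreeMonoid.of i) :=
    ConGen.Rel.of _ _ (Or.inr (Or.inr ⟨i, j, h, rfl, rfl⟩))
  simpa [jonesGen, map_mul] using (Con.eq _).mpr hr

def OkIdx (n k : ℕ) (parts : Fin k → ℕ) : Type :=
  {i : Fin (n - 1) // ¬ ∃ t : Fin k, 0 < (t : ℕ) ∧ (i : ℕ) + 1 = auxCum k parts (t : ℕ)}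

lemma jones_main (n k : ℕ) (parts : Fin k → ℕ)
    (hle : ∀ t, parts t ≤ 3) (hsum : ∑ t, parts t = n)
    (a : JonesMonoid n)
    (ha : a ∈ Submonoid.closure {x | ∃ i : Fin (n - 1),
      (¬ ∃ t : Fin k, 0 < (t : ℕ) ∧ (i : ℕ) + 1 = auxCum k parts (t : ℕ)) ∧
      x = jonesGen n i}) :
    a * a = a := by
  obtain ⟨l, hl, rfl⟩ := Submonoid.exists_list_of_mem_closure ha
  have hl' : ∀ y ∈ l, ∃ i : OkIdx n k parts, y = jonesGen n i.1 := by
    intro y hy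
    obtain ⟨i, hOk, hy⟩ := hl y hy
    exact ⟨⟨i, hOk⟩, hy⟩
  have extract : ∀ L : List (JonesMonoid n),
      (∀ y ∈ L, ∃ i : OkIdx n k parts, y = jonesGen n i.1) →
      ∃ L' : List (OkIdx n k parts), L = L'.map fun i => jonesGen n i.1 := by
    intro L
    induction L with
    | nil => exact fun _ => ⟨[], rfl⟩
    | cons y t ih =>
      intro h
      obtain ⟨i, hy⟩ := h y List.mem_cons_self
      obtain ⟨t', ht'⟩ := ih (fun z hz => h z (List.mem_cons_of_mem y hz))
      exact ⟨i :: t', by rw [List.map_cons, ← hy, ← ht']⟩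
  obtain ⟨l', hle'⟩ := extract l hl'
  subst hle'
  have h1 : ∀ i : OkIdx n k parts, jonesGen n i.1 * jonesGen n i.1 = jonesGen n i.1 :=
    fun i => jones_sq n i.1
  have h2 : ∀ i j : OkIdx n k parts,
      auxBlk k parts (i.1 : ℕ) ≠ auxBlk k parts (j.1 : ℕ) →
      jonesGen n i.1 * jonesGen n j.1 = jonesGen n j.1 * jonesGen n i.1 := by
    intro i j hb
    exact jones_comm n i.1 j.1 (auxBlk_gap n k parts hsum i.1 j.1 i.2 j.2 hb)
  have h3 : ∀ i j : OkIdx n k parts,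
      auxBlk k parts (i.1 : ℕ) = auxBlk k parts (j.1 : ℕ) →
      jonesGen n i.1 * jonesGen n j.1 * jonesGen n i.1 = jonesGen n i.1 := by
    intro i j hb
    by_cases hij : (i.1 : ℕ) = (j.1 : ℕ)
    · rw [show j.1 = i.1 from Fin.val_injective hij.symm, jones_sq n i.1, jones_sq n i.1]
    · rcases auxBlk_same n k parts hle hsum i.1 j.1 i.2 j.2 hb with h | h | h
      · exact absurd h hij
      · exact jones_braid n i.1 j.1 (Or.inl h)
      · exact jones_braid n i.1 j.1 (Or.inr h)
  have h4 : ∀ i j m : OkIdx n k parts,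
      auxBlk k parts (i.1 : ℕ) = auxBlk k parts (j.1 : ℕ) →
      auxBlk k parts (j.1 : ℕ) = auxBlk k parts (m.1 : ℕ) →
      i = j ∨ j = m ∨ i = m := by
    intro i j m hij hjm
    by_contra hc
    push_neg at hc
    obtain ⟨hc1, hc2, hc3⟩ := hc
    have d1 : (i.1 : ℕ) ≠ (j.1 : ℕ) := fun h => hc1 (Subtype.ext (Fin.val_injective h))
    have d2 : (j.1 : ℕ) ≠ (m.1 : ℕ) := fun h => hc2 (Subtype.ext (Fin.val_injective h))
    have d3 : (i.1 : ℕ) ≠ (m.1 : ℕ) := fun h => hc3 (Subtype.ext (Fin.val_injective h))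
    have s1 := auxBlk_same n k parts hle hsum i.1 j.1 i.2 j.2 hij
    have s2 := auxBlk_same n k parts hle hsum j.1 m.1 j.2 m.2 hjm
    have s3 := auxBlk_same n k parts hle hsum i.1 m.1 i.2 m.2 (hij.trans hjm)
    rcases s1 with h | h | h <;> rcases s2 with h' | h' | h' <;>
      rcases s3 with h'' | h'' | h'' <;> omega
  exact aux_prodg_idem (fun i : OkIdx n k parts => jonesGen n i.1)
    (fun i => auxBlk k parts (i.1 : ℕ)) h1 h2 h3 h4 l'

/-- Let `P = a_1 + ⋯ + a_k` be a partition of `n` with all parts `a_t ≤ 3`. The set of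
elements of `J_n` admitting the partition `P` — i.e. the submonoid generated by the
hook generators not crossing any of the `k - 1` dividing lines (placed after
`a_1 + ⋯ + a_t` strands for `0 < t < k`) — is closed under composition, and all of
its elements are idempotent; hence it is an idempotent submonoid of `J_n`. -/
theorem jones_partition_idempotent_submonoid (n k : ℕ) (parts : Fin k → ℕ)
    (hle : ∀ t, parts t ≤ 3) (hpos : ∀ t, 1 ≤ parts t)
    (hsum : ∑ t, parts t = n) :
    ∀ S : Submonoid (JonesMonoid n),
      S = Submonoid.closure
        { x | ∃ i : Fin (n - 1),
            (¬ ∃ t : Fin k, 0 < (t : ℕ) ∧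
              (i : ℕ) + 1 = ∑ j ∈ Finset.univ.filter (fun j : Fin k => (j : ℕ) < t),
                parts j) ∧
            x = jonesGen n i } →
      (∀ a ∈ S, ∀ b ∈ S, a * b ∈ S) ∧ (∀ a ∈ S, a * a = a) := by
  intro S hS
  subst hS
  refine ⟨fun a ha b hb => Submonoid.mul_mem _ ha hb, ?_⟩
  intro a ha
  exact jones_main n k parts hle hsum a ha
end
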